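/- Let μ be the uniform probability measure on {-1,1}^n. Define I(y) = Σ_{i=1}^n ( ((1+y_i)/2)·log(1+y_i) + ((1-y_i)/2)·log(1-y_i) ) for y ∈ [-1,1]^n. There exists a universal constant κ > 0 such that for every continuously differentiable function f : ℝ^n → ℝ, log ∫ e^f dμ ≤ sup_{y ∈ [-1,1]^n} ( f(y) - I(y) ) + κ · b(V), where V = ∇f([-1,1]^n) is the image of [-1,1]^n under the gradient of f, and b(V) = E[ sup_{ξ ∈ V} ⟨ξ,ε⟩ ] with ε uniformly distributed on {-1,1}^n. -/

import Mathlib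

open MeasureTheory Real Set ENNReal
open scoped Classical

/-- The uniform probability measure on the discrete hypercube `{-1,1}ⁿ`,
viewed as a measure on `ℝⁿ`. -/
noncomputable def cubeUniform (n : ℕ) : Measure (Fin n → ℝ) :=
  Measure.pi fun _ =>
    ((2 : ℝ≥0∞)⁻¹ • Measure.dirac (-1 : ℝ) + (2 : ℝ≥0∞)⁻¹ • Measure.dirac (1 : ℝ))

/-- The logarithmic Laplace transform `Λ_μ(ξ) = log ∫ e^{⟨ξ,x⟩} dμ(x)` of the uniform
measure on `{-1,1}ⁿ`. -/
noncomputable def logLaplaceCube (n : ℕ) (ξ : Fin n → ℝ) : ℝ :=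
  Real.log (∫ x, Real.exp (∑ i, ξ i * x i) ∂cubeUniform n)

/-- The solid hypercube `[-1,1]ⁿ`. -/
def solidCube (n : ℕ) : Set (Fin n → ℝ) := {y | ∀ i, y i ∈ Set.Icc (-1 : ℝ) 1}

/-- `I(y) = ∑ i, ((1+yᵢ)/2) log (1+yᵢ) + ((1-yᵢ)/2) log (1-yᵢ)`, the relative entropy
`H(μ_y | μ)` of the product measure with barycenter `y ∈ [-1,1]ⁿ` with respect to the
uniform measure on `{-1,1}ⁿ`. -/
noncomputable def cubeEnt (n : ℕ) (y : Fin n → ℝ) : ℝ :=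
  ∑ i, ((1 + y i) / 2 * Real.log (1 + y i) + (1 - y i) / 2 * Real.log (1 - y i))

namespace MFAux


noncomputable def vtx {n : ℕ} (s : Fin n → Bool) : Fin n → ℝ := fun i => if s i then 1 else -1

noncomputable def ent1 (t : ℝ) : ℝ := (1+t)/2 * Real.log (1+t) + (1-t)/2 * Real.log (1-t)

noncomputable def entI (n : ℕ) (y : Fin n → ℝ) : ℝ := ∑ i, ent1 (y i)

lemma sum_split {n : ℕ} {M : Type*} [AddCommMonoid M] (G : (Fin (n+1) → Bool) → M) :
    ∑ s, G s = ∑ b : Bool, ∑ t : Fin n → Bool, G (Fin.cons b t) := by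
  rw [← (Fin.consEquiv (fun _ => Bool)).sum_comp G, Fintype.sum_prod_type]
  rfl

noncomputable def bv (b : Bool) : ℝ := if b then 1 else -1

lemma vtx_cons {n : ℕ} (b : Bool) (t : Fin n → Bool) :
    vtx (Fin.cons b t) = Fin.cons (bv b) (vtx t) := by
  funext i
  refine Fin.cases ?_ (fun j => ?_) i <;> simp [vtx, bv]

lemma entI_cons {n : ℕ} (c : ℝ) (y : Fin n → ℝ) :
    entI (n+1) (Fin.cons c y) = ent1 c + entI n y := by
  simp [entI, Fin.sum_univ_succ]

lemma cons_mem_cube {n : ℕ} {c : ℝ} {y : Fin n → ℝ} (hc : c ∈ Set.Icc (-1:ℝ) 1)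
    (hy : ∀ i, y i ∈ Set.Icc (-1:ℝ) 1) :
    ∀ i, (Fin.cons c y : Fin (n+1) → ℝ) i ∈ Set.Icc (-1:ℝ) 1 := by
  intro i
  refine Fin.cases ?_ (fun j => ?_) i <;> simp [hc, hy]

lemma lemF (n : ℕ) (q : (Fin n → Bool) → ℝ) (f g Ψ : (Fin n → ℝ) → ℝ) (S : ℝ)
    (hq : ∀ s, 0 < q s) (hq1 : (∑ s, q s) = 1)
    (hΨ : ∀ u v : Fin n → ℝ, ∀ θ : ℝ, 0 ≤ θ → θ ≤ 1 →
        Ψ (fun i => θ * u i + (1 - θ) * v i) ≤ θ * Ψ u + (1 - θ) * Ψ v)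
    (hfg : ∀ x y : Fin n → ℝ, (∀ i, x i ∈ Set.Icc (-1:ℝ) 1) → (∀ i, y i ∈ Set.Icc (-1:ℝ) 1) →
        f x - g y ≤ Ψ (x - y))
    (hS : ∀ y : Fin n → ℝ, (∀ i, y i ∈ Set.Icc (-1:ℝ) 1) → g y - entI n y ≤ S) :
    (∑ s, q s * f (vtx s)) - (∑ s, q s * Real.log (2^n * q s)) ≤
      S + ((2:ℝ)^n)⁻¹ * ∑ s, Ψ (fun i => 2 * vtx s i) := by
  induction n generalizing S with
  | zero =>
      have hcube : ∀ (x : Fin 0 → ℝ) (i : Fin 0), x i ∈ Set.Icc (-1:ℝ) 1 := fun x i => i.elim0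
      have hsum : ∀ (F : (Fin 0 → Bool) → ℝ), (∑ s, F s) = F (fun _ => false) := fun F =>
        (Fintype.sum_unique F).trans (congrArg F (Subsingleton.elim _ _))
      set z : Fin 0 → Bool := fun _ => false with hz
      have hq1' : q z = 1 := by rw [← hsum q]; exact hq1
      have h1 : f (vtx z) - g (vtx z) ≤ Ψ (vtx z - vtx z) := hfg _ _ (hcube _) (hcube _)
      have h2 : g (vtx z) - entI 0 (vtx z) ≤ S := hS _ (hcube _)
      have h3 : entI 0 (vtx z) = 0 := by simp [entI]
      have h4 : (vtx z - vtx z : Fin 0 → ℝ) = (fun i => 2 * vtx z i) := Subsingleton.elim _ _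
      rw [h4] at h1
      rw [hsum (fun s => q s * f (vtx s)), hsum (fun s => q s * Real.log (2^0 * q s)),
        hsum (fun s => Ψ (fun i => 2 * vtx s i)), hq1']
      simp only [pow_zero, one_mul, inv_one, Real.log_one, mul_zero]
      linarith
  | succ n ih =>
      set A : Bool → ℝ := fun b => ∑ t, q (Fin.cons b t) with hAdef
      have hApos : ∀ b, 0 < A b := fun b =>
        Finset.sum_pos (fun t _ => hq _) Finset.univ_nonempty
      have hAne : ∀ b, A b ≠ 0 := fun b => (hApos b).ne'
      have hAsum : A true + A false = 1 := by
        rw [sum_split q] at hq1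
        simpa [Fintype.sum_bool] using hq1
      set y₁ : ℝ := A true - A false with hy₁def
      have h1y : 1 + y₁ = 2 * A true := by rw [hy₁def]; linarith
      have h2y : 1 - y₁ = 2 * A false := by rw [hy₁def]; linarith
      have hy₁mem : y₁ ∈ Set.Icc (-1:ℝ) 1 := by
        constructor <;> [nlinarith [hApos true, hApos false]; nlinarith [hApos true, hApos false]]
      have hbvmem : ∀ b, bv b ∈ Set.Icc (-1:ℝ) 1 := by
        intro b; cases b <;> simp [bv]
      have key : ∀ b : Bool,
          (∑ t, (q (Fin.cons b t) / A b) * f (Fin.cons (bv b) (vtx t)))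
          - (∑ t, (q (Fin.cons b t) / A b) * Real.log (2^n * (q (Fin.cons b t) / A b)))
          ≤ (S + ent1 y₁) + ((2:ℝ)^n)⁻¹ *
              ∑ t, Ψ (Fin.cons (bv b - y₁) (fun i => 2 * vtx t i)) := by
        intro b
        refine ih (fun t => q (Fin.cons b t) / A b)
          (fun x => f (Fin.cons (bv b) x)) (fun y => g (Fin.cons y₁ y))
          (fun z => Ψ (Fin.cons (bv b - y₁) z)) (S + ent1 y₁)
          (fun t => div_pos (hq _) (hApos b)) ?_ ?_ ?_ ?_
        · rw [← Finset.sum_div]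
          exact div_self (hAne b)
        · intro u v θ h0 h1
          have e : (Fin.cons (bv b - y₁) (fun i => θ * u i + (1 - θ) * v i) : Fin (n+1) → ℝ)
              = fun i => θ * (Fin.cons (bv b - y₁) u : Fin (n+1) → ℝ) i
                  + (1 - θ) * (Fin.cons (bv b - y₁) v : Fin (n+1) → ℝ) i := by
            funext i
            refine Fin.cases ?_ (fun j => ?_) i <;> simp <;> ring
          show Ψ (Fin.cons (bv b - y₁) (fun i => θ * u i + (1 - θ) * v i)) ≤ _
          rw [e]
          exact hΨ _ _ θ h0 h1
        · intro x y hx hy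
          have e : (Fin.cons (bv b) x : Fin (n+1) → ℝ) - Fin.cons y₁ y
              = Fin.cons (bv b - y₁) (x - y) := by
            funext i
            refine Fin.cases ?_ (fun j => ?_) i <;> simp
          have := hfg _ _ (cons_mem_cube (hbvmem b) hx) (cons_mem_cube hy₁mem hy)
          rw [e] at this
          exact this
        · intro y hy
          have := hS _ (cons_mem_cube hy₁mem hy)
          rw [entI_cons] at this
          linarith
      have E1 : (∑ s, q s * f (vtx s))
          = ∑ b : Bool, A b * ∑ t, (q (Fin.cons b t) / A b) * f (Fin.cons (bv b) (vtx t)) := by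
        rw [sum_split (fun s => q s * f (vtx s))]
        refine Finset.sum_congr rfl (fun b _ => ?_)
        rw [Finset.mul_sum]
        refine Finset.sum_congr rfl (fun t _ => ?_)
        rw [vtx_cons, ← mul_assoc, mul_div_cancel₀ _ (hAne b)]
      have E2 : (∑ s, q s * Real.log (2^(n+1) * q s))
          = ∑ b : Bool, (A b * Real.log (2 * A b)
              + A b * ∑ t, (q (Fin.cons b t) / A b) * Real.log (2^n * (q (Fin.cons b t) / A b))) := by
        rw [sum_split (fun s => q s * Real.log (2^(n+1) * q s))]
        refine Finset.sum_congr rfl (fun b _ => ?_)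
        have hper : ∀ t, q (Fin.cons b t) * Real.log (2^(n+1) * q (Fin.cons b t))
            = q (Fin.cons b t) * Real.log (2 * A b)
              + A b * ((q (Fin.cons b t) / A b) * Real.log (2^n * (q (Fin.cons b t) / A b))) := by
          intro t
          set r := q (Fin.cons b t) / A b with hr
          have hrpos : 0 < r := div_pos (hq _) (hApos b)
          have hqr : q (Fin.cons b t) = A b * r := by
            rw [hr, mul_comm, div_mul_cancel₀ _ (hAne b)]
          rw [hqr]
          have hfac : (2:ℝ)^(n+1) * (A b * r) = (2 * A b) * (2^n * r) := by ring
          rw [hfac, Real.log_mul (mul_pos two_pos (hApos b)).ne'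
            (mul_pos (pow_pos two_pos n) hrpos).ne']
          ring
        rw [Finset.sum_congr rfl (fun t _ => hper t), Finset.sum_add_distrib,
          ← Finset.sum_mul, ← Finset.mul_sum]
      have E3 : (∑ s, Ψ (fun i => 2 * vtx s i))
          = ∑ b : Bool, ∑ t, Ψ (Fin.cons (2 * bv b) (fun i => 2 * vtx t i)) := by
        rw [sum_split (fun s => Ψ (fun i => 2 * vtx s i))]
        refine Finset.sum_congr rfl (fun b _ => Finset.sum_congr rfl (fun t _ => ?_))
        congr 1
        funext i
        refine Fin.cases ?_ (fun j => ?_) i <;> simp [vtx_cons]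
      have chord : ∀ Z : Fin n → ℝ,
          A true * Ψ (Fin.cons (bv true - y₁) Z) + A false * Ψ (Fin.cons (bv false - y₁) Z)
          ≤ (Ψ (Fin.cons (2 * bv true) Z) + Ψ (Fin.cons (2 * bv false) Z)) / 2 := by
        intro Z
        have ha0 : 0 < A true := hApos true
        have ha1 : 0 < A false := hApos false
        have e1 : (fun i => (A true / 2) * (Fin.cons (-2:ℝ) Z : Fin (n+1) → ℝ) i
            + (1 - A true / 2) * (Fin.cons (2:ℝ) Z : Fin (n+1) → ℝ) i)
            = (Fin.cons (bv true - y₁) Z : Fin (n+1) → ℝ) := by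
          funext i
          refine Fin.cases ?_ (fun j => ?_) i <;> simp [bv, hy₁def] <;> ring_nf
          linarith
        have e2 : (fun i => ((1 + A true) / 2) * (Fin.cons (-2:ℝ) Z : Fin (n+1) → ℝ) i
            + (1 - (1 + A true) / 2) * (Fin.cons (2:ℝ) Z : Fin (n+1) → ℝ) i)
            = (Fin.cons (bv false - y₁) Z : Fin (n+1) → ℝ) := by
          funext i
          refine Fin.cases ?_ (fun j => ?_) i <;> simp [bv, hy₁def] <;> ring_nf
          linarith
        have h1 := hΨ (Fin.cons (-2:ℝ) Z) (Fin.cons (2:ℝ) Z) (A true / 2)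
          (by linarith) (by linarith)
        have h2 := hΨ (Fin.cons (-2:ℝ) Z) (Fin.cons (2:ℝ) Z) ((1 + A true) / 2)
          (by linarith) (by linarith)
        rw [e1] at h1
        rw [e2] at h2
        have hb1 : (2 : ℝ) * bv true = 2 := by simp [bv]
        have hb2 : (2 : ℝ) * bv false = -2 := by simp [bv]
        rw [hb1, hb2]
        have hAf : A false = 1 - A true := by linarith
        rw [hAf]
        nlinarith [mul_le_mul_of_nonneg_left h1 ha0.le,
          mul_le_mul_of_nonneg_left h2 (by linarith : (0:ℝ) ≤ 1 - A true)]
      have cs : ((2:ℝ)^n)⁻¹ * (A true * (∑ t, Ψ (Fin.cons (bv true - y₁) (fun i => 2 * vtx t i)))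
          + A false * (∑ t, Ψ (Fin.cons (bv false - y₁) (fun i => 2 * vtx t i))))
          ≤ ((2:ℝ)^n)⁻¹ * (((∑ t, Ψ (Fin.cons (2 * bv true) (fun i => 2 * vtx t i)))
            + (∑ t, Ψ (Fin.cons (2 * bv false) (fun i => 2 * vtx t i)))) / 2) := by
        refine mul_le_mul_of_nonneg_left ?_ (by positivity)
        calc A true * (∑ t, Ψ (Fin.cons (bv true - y₁) (fun i => 2 * vtx t i)))
              + A false * (∑ t, Ψ (Fin.cons (bv false - y₁) (fun i => 2 * vtx t i)))
            = ∑ t, (A true * Ψ (Fin.cons (bv true - y₁) (fun i => 2 * vtx t i))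
                + A false * Ψ (Fin.cons (bv false - y₁) (fun i => 2 * vtx t i))) := by
              rw [Finset.mul_sum, Finset.mul_sum, ← Finset.sum_add_distrib]
          _ ≤ ∑ t, ((Ψ (Fin.cons (2 * bv true) (fun i => 2 * vtx t i))
                + Ψ (Fin.cons (2 * bv false) (fun i => 2 * vtx t i))) / 2) :=
              Finset.sum_le_sum (fun t _ => chord _)
          _ = ((∑ t, Ψ (Fin.cons (2 * bv true) (fun i => 2 * vtx t i)))
                + (∑ t, Ψ (Fin.cons (2 * bv false) (fun i => 2 * vtx t i)))) / 2 := by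
              rw [← Finset.sum_div, Finset.sum_add_distrib]
      have ent1y : ent1 y₁ = A true * Real.log (2 * A true) + A false * Real.log (2 * A false) := by
        show (1+y₁)/2 * Real.log (1+y₁) + (1-y₁)/2 * Real.log (1-y₁) = _
        rw [h1y, h2y]
        ring
      rw [E1, E2, E3, Fintype.sum_bool, Fintype.sum_bool, Fintype.sum_bool, pow_succ, mul_inv]
      have kT := key true
      have kF := key false
      have hkT := mul_le_mul_of_nonneg_left kT (hApos true).le
      have hkF := mul_le_mul_of_nonneg_left kF (hApos false).le
      have hSsplit : A true * (S + ent1 y₁) + A false * (S + ent1 y₁) = S + ent1 y₁ := by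
        rw [← add_mul, hAsum, one_mul]
      nlinarith [hkT, hkF, cs, ent1y, hSsplit]


lemma cubeUniform_eq (n : ℕ) :
    cubeUniform n = ∑ s : Fin n → Bool, (((2:ℝ≥0∞)^n)⁻¹ • Measure.dirac (vtx s)) := by
  haveI : IsFiniteMeasure ((2 : ℝ≥0∞)⁻¹ • Measure.dirac (-1:ℝ) + (2:ℝ≥0∞)⁻¹ • Measure.dirac (1:ℝ)) := by
    constructor
    rw [Measure.add_apply, Measure.smul_apply, Measure.smul_apply]
    simp
  refine Measure.pi_eq (fun A hA => ?_)
  rw [Measure.coe_finset_sum]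
  rw [Finset.sum_apply]
  have hmem : MeasurableSet (Set.univ.pi A) := MeasurableSet.univ_pi hA
  have hterm : ∀ s : Fin n → Bool,
      (((2:ℝ≥0∞)^n)⁻¹ • Measure.dirac (vtx s)) (Set.univ.pi A)
        = ((2:ℝ≥0∞)^n)⁻¹ * ∏ i, (if vtx s i ∈ A i then (1:ℝ≥0∞) else 0) := by
    intro s
    rw [Measure.smul_apply, Measure.dirac_apply' _ hmem, smul_eq_mul]
    congr 1
    rw [Set.indicator_apply]
    rw [Finset.prod_boole]
    by_cases h : vtx s ∈ Set.univ.pi A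
    · rw [if_pos h, if_pos (fun i _ => (Set.mem_univ_pi.mp h) i)]
      rfl
    · rw [if_neg h, if_neg (fun hc => h (Set.mem_univ_pi.mpr (fun i => hc i (Finset.mem_univ i))))]
  rw [Finset.sum_congr rfl (fun s _ => hterm s), ← Finset.mul_sum]
  have hswap : (∑ s : Fin n → Bool, ∏ i, (if vtx s i ∈ A i then (1:ℝ≥0∞) else 0))
      = ∏ i, ∑ b : Bool, (if (if b then (1:ℝ) else -1) ∈ A i then (1:ℝ≥0∞) else 0) := by
    rw [Finset.prod_univ_sum (fun _ => (Finset.univ : Finset Bool))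
      (fun i b => if (if b then (1:ℝ) else -1) ∈ A i then (1:ℝ≥0∞) else 0)]
    rw [Fintype.piFinset_univ]
    rfl
  rw [hswap]
  have hrhs : ∀ i, ((2 : ℝ≥0∞)⁻¹ • Measure.dirac (-1 : ℝ) + (2 : ℝ≥0∞)⁻¹ • Measure.dirac (1 : ℝ)) (A i)
      = 2⁻¹ * ((if (-1:ℝ) ∈ A i then (1:ℝ≥0∞) else 0) + (if (1:ℝ) ∈ A i then (1:ℝ≥0∞) else 0)) := by
    intro i
    rw [Measure.add_apply, Measure.smul_apply, Measure.smul_apply,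
      Measure.dirac_apply' _ (hA i), Measure.dirac_apply' _ (hA i), smul_eq_mul, smul_eq_mul,
      ← mul_add]
    simp only [Set.indicator_apply, Pi.one_apply]
  rw [Finset.prod_congr rfl (fun i _ => hrhs i), Finset.prod_mul_distrib, Finset.prod_const,
    ← ENNReal.inv_pow]
  congr 1
  · simp [Finset.card_univ]
  · refine Finset.prod_congr rfl (fun i _ => ?_)
    rw [Fintype.sum_bool]
    exact add_comm _ _

lemma integrable_dirac_smul {n : ℕ} (g : (Fin n → ℝ) → ℝ) (v : Fin n → ℝ) (c : ℝ≥0∞) (hc : c ≠ ⊤) :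
    Integrable g (c • Measure.dirac v) := by
  refine Integrable.smul_measure ?_ hc
  exact (integrable_const (g v)).congr (ae_eq_dirac g).symm

lemma integral_cubeUniform {n : ℕ} (g : (Fin n → ℝ) → ℝ) :
    ∫ x, g x ∂cubeUniform n = ((2:ℝ)^n)⁻¹ * ∑ s : Fin n → Bool, g (vtx s) := by
  rw [cubeUniform_eq]
  rw [integral_finset_sum_measure
    (fun s _ => integrable_dirac_smul g (vtx s) _ (by simp))]
  have : ∀ s : Fin n → Bool, ∫ x, g x ∂(((2:ℝ≥0∞)^n)⁻¹ • Measure.dirac (vtx s))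
      = ((2:ℝ)^n)⁻¹ * g (vtx s) := by
    intro s
    rw [integral_smul_measure, integral_dirac]
    congr 1
    simp [ENNReal.toReal_inv]
  rw [Finset.sum_congr rfl (fun s _ => this s), ← Finset.mul_sum]


lemma cubeEnt_eq_entI (n : ℕ) (y : Fin n → ℝ) : cubeEnt n y = entI n y := rfl

lemma ent1_nonneg {t : ℝ} (ht : t ∈ Set.Icc (-1:ℝ) 1) : 0 ≤ ent1 t := by
  obtain ⟨h1, h2⟩ := ht
  rcases eq_or_lt_of_le h1 with h | h
  · simp [ent1, ← h]
    norm_num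
    positivity
  rcases eq_or_lt_of_le h2 with h' | h'
  · simp [ent1, h']
    positivity
  have hp : 0 < (1+t)/2 := by linarith
  have hq : 0 < (1-t)/2 := by linarith
  have l1 : Real.log ((1+t)⁻¹) ≤ (1+t)⁻¹ - 1 := by
    have := Real.log_le_sub_one_of_pos (inv_pos.mpr (by linarith : (0:ℝ) < 1+t))
    simpa using this
  have l2 : Real.log ((1-t)⁻¹) ≤ (1-t)⁻¹ - 1 := by
    have := Real.log_le_sub_one_of_pos (inv_pos.mpr (by linarith : (0:ℝ) < 1-t))
    simpa using this
  rw [Real.log_inv] at l1 l2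
  have e1 : (1+t)/2 * Real.log (1+t) ≥ (1+t)/2 * (1 - (1+t)⁻¹) := by
    apply mul_le_mul_of_nonneg_left _ hp.le
    linarith
  have e2 : (1-t)/2 * Real.log (1-t) ≥ (1-t)/2 * (1 - (1-t)⁻¹) := by
    apply mul_le_mul_of_nonneg_left _ hq.le
    linarith
  have hne1 : (1:ℝ)+t ≠ 0 := by linarith
  have hne2 : (1:ℝ)-t ≠ 0 := by linarith
  have c1 : (1+t)/2 * (1 - (1+t)⁻¹) = (1+t)/2 - 1/2 := by
    field_simp
  have c2 : (1-t)/2 * (1 - (1-t)⁻¹) = (1-t)/2 - 1/2 := by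
    field_simp
  unfold ent1
  nlinarith [e1, e2]


end MFAux

set_option maxHeartbeats 1000000 in
/-- **Dimension-free mean-field approximation on the discrete hypercube.** There is a
universal constant `κ > 0` such that for every `C¹` function `f : ℝⁿ → ℝ`,
`log ∫ e^f dμ ≤ sup_{y ∈ [-1,1]ⁿ} (f(y) - I(y)) + κ b(V)` where `V = ∇f([-1,1]ⁿ)` and
`b(V) = E[sup_{ξ ∈ V} ⟨ξ,ε⟩]`, `ε` uniform on `{-1,1}ⁿ`. -/
theorem meanField_cube :
    ∃ κ : ℝ, 0 < κ ∧ ∀ (n : ℕ) (f : (Fin n → ℝ) → ℝ), ContDiff ℝ 1 f →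
      Real.log (∫ x, Real.exp (f x) ∂cubeUniform n) ≤
        (⨆ y : solidCube n, (f y - cubeEnt n y)) +
          κ * ∫ x, (⨆ y : solidCube n, ∑ i, fderiv ℝ f y (Pi.single i 1) * x i)
            ∂cubeUniform n := by
  refine ⟨2, by norm_num, fun n f hf => ?_⟩
  haveI hne : Nonempty ↥(solidCube n) :=
    ⟨⟨0, fun i => by constructor <;> norm_num⟩⟩
  -- compactness of the cube
  have hKc : IsCompact (solidCube n) := by
    have he : solidCube n = Set.pi Set.univ (fun _ : Fin n => Set.Icc (-1:ℝ) 1) := by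
      ext y
      constructor
      · intro h i _
        exact h i
      · intro h i
        exact h i (Set.mem_univ i)
    rw [he]; exact isCompact_univ_pi (fun i => isCompact_Icc)
  -- the width functional
  set Φ : (Fin n → ℝ) → ℝ :=
    fun z => ⨆ y : solidCube n, ∑ i, fderiv ℝ f (↑y) (Pi.single i 1) * z i with hΦdef
  have hDcont : ∀ z : Fin n → ℝ,
      Continuous fun y : Fin n → ℝ => ∑ i, fderiv ℝ f y (Pi.single i 1) * z i := by
    intro z
    have hcf : Continuous (fderiv ℝ f) := hf.continuous_fderiv one_ne_zero
    refine continuous_finset_sum _ (fun i _ => ?_)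
    exact (((ContinuousLinearMap.apply ℝ ℝ (Pi.single i (1:ℝ))).continuous.comp hcf).mul
      continuous_const)
  have hbdd : ∀ z : Fin n → ℝ,
      BddAbove (Set.range fun y : solidCube n => ∑ i, fderiv ℝ f (↑y) (Pi.single i 1) * z i) := by
    intro z
    have h1 : BddAbove ((fun y => ∑ i, fderiv ℝ f y (Pi.single i 1) * z i) '' solidCube n) :=
      hKc.bddAbove_image (hDcont z).continuousOn
    rwa [Set.image_eq_range] at h1
  -- convexity of Φ
  have hconv : ∀ u v : Fin n → ℝ, ∀ θ : ℝ, 0 ≤ θ → θ ≤ 1 →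
      Φ (fun i => θ * u i + (1 - θ) * v i) ≤ θ * Φ u + (1 - θ) * Φ v := by
    intro u v θ h0 h1
    refine ciSup_le (fun y => ?_)
    have e : (∑ i, fderiv ℝ f (↑y) (Pi.single i 1) * (θ * u i + (1 - θ) * v i))
        = θ * (∑ i, fderiv ℝ f (↑y) (Pi.single i 1) * u i)
          + (1 - θ) * (∑ i, fderiv ℝ f (↑y) (Pi.single i 1) * v i) := by
      rw [Finset.mul_sum, Finset.mul_sum, ← Finset.sum_add_distrib]
      exact Finset.sum_congr rfl (fun i _ => by ring)
    rw [e]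
    exact add_le_add (mul_le_mul_of_nonneg_left (le_ciSup (hbdd u) y) h0)
      (mul_le_mul_of_nonneg_left (le_ciSup (hbdd v) y) (by linarith))
  -- positive homogeneity of Φ (factor 2)
  have hhom : ∀ z : Fin n → ℝ, Φ (fun i => 2 * z i) = 2 * Φ z := by
    intro z
    rw [hΦdef]
    rw [mul_iSup_of_nonneg (by norm_num : (0:ℝ) ≤ 2)]
    refine congrArg _ (funext fun y => ?_)
    rw [Finset.mul_sum]
    exact Finset.sum_congr rfl (fun i _ => by ring)
  -- the gradient bound via the mean value theorem
  have hfg : ∀ x y : Fin n → ℝ, (∀ i, x i ∈ Set.Icc (-1:ℝ) 1) → (∀ i, y i ∈ Set.Icc (-1:ℝ) 1) →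
      f x - f y ≤ Φ (x - y) := by
    intro x y hx hy
    by_cases hxy : x = y
    · subst hxy
      have hz0 : Φ (x - x) = 0 := by
        have hzz : ∀ y' : solidCube n,
            (∑ i, fderiv ℝ f (↑y') (Pi.single i 1) * (x - x) i) = (0:ℝ) := by
          intro y'
          refine Finset.sum_eq_zero (fun i _ => ?_)
          simp
        exact (congrArg iSup (funext hzz)).trans ciSup_const
      rw [hz0, sub_self]
    · set z := x - y with hzdef
      have hd : ∀ t : ℝ, HasDerivAt (fun t : ℝ => f (y + t • z)) (fderiv ℝ f (y + t • z) z) t := by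
        intro t
        have h1 : HasFDerivAt f (fderiv ℝ f (y + t • z)) (y + t • z) :=
          (hf.differentiable one_ne_zero (y + t • z)).hasFDerivAt
        have h2 : HasDerivAt (fun t : ℝ => y + t • z) z t := by
          simpa using ((hasDerivAt_id t).smul_const z).const_add y
        have := h1.comp_hasDerivAt t h2
        exact this
      have hcont : ContinuousOn (fun t : ℝ => f (y + t • z)) (Set.Icc 0 1) :=
        (hf.continuous.comp (by continuity)).continuousOn
      obtain ⟨c, hc, hceq⟩ := exists_hasDerivAt_eq_slope (fun t : ℝ => f (y + t • z))
        (fun t => fderiv ℝ f (y + t • z) z) one_pos hcont (fun t _ => hd t)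
      have h10 : y + (1:ℝ) • z = x := by
        rw [one_smul, hzdef, add_comm, sub_add_cancel]
      have h00 : y + (0:ℝ) • z = y := by rw [zero_smul, add_zero]
      rw [h10, h00] at hceq
      have hval : f x - f y = fderiv ℝ f (y + c • z) z := by
        rw [hceq]; ring
      set p := y + c • z with hpdef
      have hpK : p ∈ solidCube n := by
        intro i
        obtain ⟨hc0, hc1⟩ := hc
        have hxi := hx i; have hyi := hy i
        have hpi : p i = y i + c * (x i - y i) := rfl
        rw [hpi]
        constructor <;> nlinarith [hxi.1, hxi.2, hyi.1, hyi.2]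
      have hexp : fderiv ℝ f p z = ∑ i, fderiv ℝ f p (Pi.single i 1) * z i := by
        have hsingle : ∀ i, (Pi.single i (z i) : Fin n → ℝ) = z i • (Pi.single i (1:ℝ) : Fin n → ℝ) := by
          intro i
          rw [← Pi.single_smul, smul_eq_mul, mul_one]
        conv_lhs => rw [show z = ∑ i, Pi.single i (z i) from (Finset.univ_sum_single z).symm]
        rw [map_sum]
        refine Finset.sum_congr rfl (fun i _ => ?_)
        rw [hsingle i, (fderiv ℝ f p).map_smul, smul_eq_mul, mul_comm]
      rw [hval, hexp]
      exact le_ciSup (hbdd z) ⟨p, hpK⟩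
  -- the Gibbs weights
  set W : ℝ := ∑ s : Fin n → Bool, Real.exp (f (MFAux.vtx s)) with hWdef
  have hW : 0 < W := Finset.sum_pos (fun s _ => Real.exp_pos _) Finset.univ_nonempty
  set q : (Fin n → Bool) → ℝ := fun s => Real.exp (f (MFAux.vtx s)) / W with hqdef
  have hqpos : ∀ s, 0 < q s := fun s => div_pos (Real.exp_pos _) hW
  have hq1 : (∑ s, q s) = 1 := by
    rw [hqdef, ← Finset.sum_div, ← hWdef, div_self hW.ne']
  -- the entropic supremum
  set Ssup : ℝ := ⨆ y : solidCube n, (f y - cubeEnt n y) with hSdef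
  have hSbdd : BddAbove (Set.range fun y : solidCube n => f (↑y) - cubeEnt n (↑y)) := by
    obtain ⟨M, hM⟩ := hKc.bddAbove_image hf.continuous.continuousOn
    refine ⟨M, fun r hr => ?_⟩
    obtain ⟨y, rfl⟩ := hr
    have hent : 0 ≤ cubeEnt n (↑y) := by
      rw [MFAux.cubeEnt_eq_entI]
      exact Finset.sum_nonneg (fun i _ => MFAux.ent1_nonneg (y.2 i))
    have hfy : f (↑y) ≤ M := hM ⟨↑y, y.2, rfl⟩
    show f (↑y) - cubeEnt n (↑y) ≤ M
    linarith
  have hS : ∀ y : Fin n → ℝ, (∀ i, y i ∈ Set.Icc (-1:ℝ) 1) →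
      f y - MFAux.entI n y ≤ Ssup := by
    intro y hy
    have := le_ciSup hSbdd (⟨y, hy⟩ : solidCube n)
    rw [MFAux.cubeEnt_eq_entI] at this
    exact this
  -- the master inequality
  have hmain := MFAux.lemF n q f f Φ Ssup hqpos hq1 hconv hfg hS
  -- rewrite the integrals as finite sums
  rw [MFAux.integral_cubeUniform (fun x => Real.exp (f x)),
    MFAux.integral_cubeUniform (fun x => ⨆ y : solidCube n,
      ∑ i, fderiv ℝ f (↑y) (Pi.single i 1) * x i)]
  -- identify the log of the partition function
  have hlogq : ∀ s, Real.log ((2:ℝ)^n * q s)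
      = Real.log ((2:ℝ)^n) + (f (MFAux.vtx s) - Real.log W) := by
    intro s
    rw [Real.log_mul (by positivity) (hqpos s).ne', hqdef,
      Real.log_div (Real.exp_ne_zero _) hW.ne', Real.log_exp]
  have hsum2 : (∑ s, q s * Real.log ((2:ℝ)^n * q s))
      = Real.log ((2:ℝ)^n) + ((∑ s, q s * f (MFAux.vtx s)) - Real.log W) := by
    have hper : ∀ s, q s * Real.log ((2:ℝ)^n * q s)
        = Real.log ((2:ℝ)^n) * q s + (q s * f (MFAux.vtx s) - Real.log W * q s) := by
      intro s
      rw [hlogq s]; ring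
    rw [Finset.sum_congr rfl (fun s _ => hper s), Finset.sum_add_distrib,
      Finset.sum_sub_distrib, ← Finset.mul_sum, ← Finset.mul_sum,
      hq1, mul_one, mul_one]
  have hT : Real.log (((2:ℝ)^n)⁻¹ * W)
      = (∑ s, q s * f (MFAux.vtx s)) - (∑ s, q s * Real.log ((2:ℝ)^n * q s)) := by
    rw [Real.log_mul (by positivity) hW.ne', Real.log_inv, hsum2]
    ring
  -- put everything together
  have hB : (∑ s : Fin n → Bool, Φ (fun i => 2 * MFAux.vtx s i))
      = 2 * ∑ s : Fin n → Bool, Φ (MFAux.vtx s) := by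
    rw [Finset.sum_congr rfl (fun s _ => hhom (MFAux.vtx s)), ← Finset.mul_sum]
  rw [← hWdef, hT]
  rw [hB] at hmain
  have harith : ((2:ℝ)^n)⁻¹ * (2 * ∑ s : Fin n → Bool, Φ (MFAux.vtx s))
      = 2 * (((2:ℝ)^n)⁻¹ * ∑ s : Fin n → Bool, Φ (MFAux.vtx s)) := by ring
  rw [harith] at hmain
  exact hmain
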